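/- Let π be a Nash stable partition of an additively separable hedonic game (V,w), let C be a part of π, and suppose C is the disjoint union of two nonempty sets C₁ and C₂ such that every u ∈ C₁ and v ∈ C₂ are non-adjacent in the underlying graph and have no common neighbor in it (i.e., are at distance at least 3). Then the partition obtained from π by replacing the part C with the two parts C₁ and C₂ is also Nash stable. -/

import Mathlib

/-- A partition of the finite vertex set `V`, represented by the function sending each
vertex to its part. -/
structure ASHGPart (V : Type*) [DecidableEq V] where
  part : V → Finset V
  mem_part : ∀ v, v ∈ part v
  eq_of_mem : ∀ u v, u ∈ part v → part u = part v

/-- The utility of vertex `v` in coalition `S`: the sum of `w v u` over `u ∈ S`, `u ≠ v`. -/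
def util {V : Type*} [DecidableEq V] (w : V → V → ℤ) (v : V) (S : Finset V) : ℤ :=
  ∑ u ∈ S.erase v, w v u

/-- A partition is Nash stable if every vertex has nonnegative utility in its own part and
does not prefer any other part of the partition. -/
def NashStable {V : Type*} [DecidableEq V] (w : V → V → ℤ) (π : ASHGPart V) : Prop :=
  ∀ v : V, 0 ≤ util w v (π.part v) ∧ ∀ x : V, util w v (π.part x) ≤ util w v (π.part v)


/-- The underlying (undirected simple) graph of the game: distinct `u, v` are adjacent
iff `w u v ≠ 0` or `w v u ≠ 0`. -/
def underlying {V : Type*} (w : V → V → ℤ) : SimpleGraph V where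
  Adj u v := u ≠ v ∧ (w u v ≠ 0 ∨ w v u ≠ 0)
  symm := ⟨fun u v h => ⟨h.1.symm, h.2.symm⟩⟩
  loopless := ⟨fun v h => h.1 rfl⟩

lemma util_union {V : Type*} [DecidableEq V] (w : V → V → ℤ) (v : V) {S T : Finset V}
    (h : Disjoint S T) : util w v (S ∪ T) = util w v S + util w v T := by
  unfold util
  rw [Finset.erase_union_distrib,
    Finset.sum_union (h.mono (Finset.erase_subset _ _) (Finset.erase_subset _ _))]

lemma util_eq_zero {V : Type*} [DecidableEq V] (w : V → V → ℤ) (v : V) {S : Finset V}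
    (h : ∀ u ∈ S, u ≠ v → w v u = 0) : util w v S = 0 :=
  Finset.sum_eq_zero fun u hu => h u (Finset.mem_of_mem_erase hu) (Finset.ne_of_mem_erase hu)

theorem stmt_2 {V : Type*} [Fintype V] [DecidableEq V] (w : V → V → ℤ)
    (hw : ∀ v, w v v = 0) (π : ASHGPart V) (hπ : NashStable w π)
    (v0 : V) (C C₁ C₂ : Finset V) (hC : C = π.part v0)
    (hdisj : Disjoint C₁ C₂) (hunion : C₁ ∪ C₂ = C)
    (hne1 : C₁.Nonempty) (hne2 : C₂.Nonempty)
    (hfar : ∀ u ∈ C₁, ∀ v ∈ C₂,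
      ¬ (underlying w).Adj u v ∧ ¬ ∃ z, (underlying w).Adj u z ∧ (underlying w).Adj z v)
    (π' : ASHGPart V)
    (hπ' : ∀ x : V, π'.part x =
      if x ∈ C₁ then C₁ else if x ∈ C₂ then C₂ else π.part x) :
    NashStable w π' := by
  -- basic membership facts
  have hm1 : ∀ u ∈ C₁, u ∈ C := fun u hu => hunion ▸ Finset.mem_union_left _ hu
  have hm2 : ∀ u ∈ C₂, u ∈ C := fun u hu => hunion ▸ Finset.mem_union_right _ hu
  have hpartC : ∀ u ∈ C, π.part u = C := by
    intro u hu
    rw [π.eq_of_mem u v0 (hC ▸ hu), ← hC]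
  -- no edges between C₁ and C₂
  have hadj0 : ∀ u ∈ C₁, ∀ v ∈ C₂, w u v = 0 ∧ w v u = 0 := by
    intro u hu v hv
    have h := (hfar u hu v hv).1
    have hne : u ≠ v := fun h' => Finset.disjoint_left.mp hdisj hu (h' ▸ hv)
    simp only [underlying, not_and, not_or, not_not] at h
    exact h hne
  -- utility splits
  have hsplit : ∀ x : V, util w x C = util w x C₁ + util w x C₂ := by
    intro x; rw [← hunion, util_union w x hdisj]
  -- vertex in C₁ gets zero from C₂ and vice versa
  have hz1 : ∀ v ∈ C₁, util w v C₂ = 0 := by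
    intro v hv
    exact util_eq_zero w v fun u hu _ => (hadj0 v hv u hu).1
  have hz2 : ∀ v ∈ C₂, util w v C₁ = 0 := by
    intro v hv
    exact util_eq_zero w v fun u hu _ => (hadj0 u hu v hv).2
  -- a vertex outside C cannot prefer C₁ or C₂
  have hdev : ∀ x, x ∉ C → util w x C₁ ≤ util w x (π.part x) ∧
      util w x C₂ ≤ util w x (π.part x) := by
    intro x hx
    have hxC : util w x C ≤ util w x (π.part x) := by
      have := (hπ x).2 v0
      rwa [← hC] at this
    have hnonneg := (hπ x).1
    have key : (∀ u ∈ C₁, w x u = 0) ∨ (∀ u ∈ C₂, w x u = 0) := by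
      by_contra h
      push_neg at h
      obtain ⟨⟨u₁, hu₁, hw₁⟩, u₂, hu₂, hw₂⟩ := h
      refine (hfar u₁ hu₁ u₂ hu₂).2 ⟨x, ⟨?_, Or.inr hw₁⟩, ⟨?_, Or.inl hw₂⟩⟩
      · exact fun h' => hx (h' ▸ hm1 u₁ hu₁)
      · exact fun h' => hx (h'.symm ▸ hm2 u₂ hu₂)
    rcases key with hk | hk
    · have h1 : util w x C₁ = 0 := util_eq_zero w x fun u hu _ => hk u hu
      constructor
      · rw [h1]; exact hnonneg
      · have := hsplit x
        rw [h1, zero_add] at this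
        rw [← this]; exact hxC
    · have h2 : util w x C₂ = 0 := util_eq_zero w x fun u hu _ => hk u hu
      constructor
      · have := hsplit x
        rw [h2, add_zero] at this
        rw [← this]; exact hxC
      · rw [h2]; exact hnonneg
  intro v
  by_cases hv1 : v ∈ C₁
  · have hp : π'.part v = C₁ := by rw [hπ' v, if_pos hv1]
    have hpv : π.part v = C := hpartC v (hm1 v hv1)
    have hvC : util w v C₁ = util w v (π.part v) := by
      rw [hpv, hsplit v, hz1 v hv1, add_zero]
    constructor
    · rw [hp, hvC]; exact (hπ v).1
    · intro x
      rw [hp, hπ' x]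
      split
      · exact le_refl _
      · split
        · rw [hz1 v hv1, hvC]
          exact (hπ v).1
        · rw [hvC]; exact (hπ v).2 x
  · by_cases hv2 : v ∈ C₂
    · have hp : π'.part v = C₂ := by
        rw [hπ' v, if_neg hv1, if_pos hv2]
      have hpv : π.part v = C := hpartC v (hm2 v hv2)
      have hvC : util w v C₂ = util w v (π.part v) := by
        rw [hpv, hsplit v, hz2 v hv2, zero_add]
      constructor
      · rw [hp, hvC]; exact (hπ v).1
      · intro x
        rw [hp, hπ' x]
        split
        · rw [hz2 v hv2, hvC]
          exact (hπ v).1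
        · split
          · exact le_refl _
          · rw [hvC]; exact (hπ v).2 x
    · have hvC : v ∉ C := by
        rw [← hunion]; simp [hv1, hv2]
      have hp : π'.part v = π.part v := by
        rw [hπ' v, if_neg hv1, if_neg hv2]
      constructor
      · rw [hp]; exact (hπ v).1
      · intro x
        rw [hp, hπ' x]
        split
        · exact (hdev v hvC).1
        · split
          · exact (hdev v hvC).2
          · exact (hπ v).2 x
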